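/- The map φ: Br_n(A) → St_n(A) ⋊ Br_n induced by y_i^a ↦ (x_{i,i+1}(a), y_i) is a group isomorphism. -/

import Mathlib

/-- Relators of the parametrized braid group `Br_{n+1}(A)` of the introduction:
generators `y i a` for `i : Fin n` (representing `y_{i+1}^a`), `a : A`, with
relations (A1), (A1×A1), (A2). -/
def pRels (n : ℕ) (A : Type) [NonUnitalRing A] : Set (FreeGroup (Fin n × A)) :=
  {r | (∃ (i : Fin n) (a b : A),
          r = FreeGroup.of (i, a) * FreeGroup.of (i, (0:A)) * FreeGroup.of (i, b) *
              (FreeGroup.of (i, (0:A)) * FreeGroup.of (i, (0:A)) * FreeGroup.of (i, a + b))⁻¹) ∨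
       (∃ (i j : Fin n) (a b : A), (i : ℕ) + 2 ≤ (j : ℕ) ∧
          r = FreeGroup.of (i, a) * FreeGroup.of (j, b) *
              (FreeGroup.of (j, b) * FreeGroup.of (i, a))⁻¹) ∨
       (∃ (i j : Fin n) (a b c : A), (i : ℕ) + 1 = (j : ℕ) ∧
          r = FreeGroup.of (i, a) * FreeGroup.of (j, b) * FreeGroup.of (i, c) *
              (FreeGroup.of (j, c) * FreeGroup.of (i, b + a * c) * FreeGroup.of (j, a))⁻¹)}

/-- The parametrized braid group `Br_{n+1}(A)`. -/
abbrev PBraid (n : ℕ) (A : Type) [NonUnitalRing A] := PresentedGroup (pRels n A)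

/-- The generator `y_{i+1}^a` of the parametrized braid group. -/
def y {n : ℕ} {A : Type} [NonUnitalRing A] (i : Fin n) (a : A) : PBraid n A :=
  PresentedGroup.of (i, a)

/-- Relators of the classical Artin braid group `Br_{n+1}` with generators
`bgen i`, `i : Fin n`. -/
def bRels (n : ℕ) : Set (FreeGroup (Fin n)) :=
  {r | (∃ i j : Fin n, (i : ℕ) + 2 ≤ (j : ℕ) ∧
          r = FreeGroup.of i * FreeGroup.of j * (FreeGroup.of j * FreeGroup.of i)⁻¹) ∨
       (∃ i j : Fin n, (i : ℕ) + 1 = (j : ℕ) ∧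
          r = FreeGroup.of i * FreeGroup.of j * FreeGroup.of i *
              (FreeGroup.of j * FreeGroup.of i * FreeGroup.of j)⁻¹)}

/-- The classical Artin braid group `Br_{n+1}`. -/
abbrev Braid (n : ℕ) := PresentedGroup (bRels n)

/-- The generator `y_{i+1}` of the braid group. -/
def bgen {n : ℕ} (i : Fin n) : Braid n := PresentedGroup.of i

/-- Generators of the Steinberg group: pairs of distinct indices with a ring element. -/
def StGen (n : ℕ) (A : Type) : Type := {p : Fin n × Fin n // p.1 ≠ p.2} × A

/-- The free-group generator `x_{ij}(a)`. -/
def xg {n : ℕ} {A : Type} (i j : Fin n) (h : i ≠ j) (a : A) : FreeGroup (StGen n A) :=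
  FreeGroup.of (⟨(i, j), h⟩, a)

/-- Relators (St0), (St1), (St2) of the Steinberg group `St_n(A)`. -/
def stRels (n : ℕ) (A : Type) [NonUnitalRing A] : Set (FreeGroup (StGen n A)) :=
  {r | (∃ (i j : Fin n) (h : i ≠ j) (a b : A),
          r = xg i j h a * xg i j h b * (xg i j h (a + b))⁻¹) ∨
       (∃ (i j k l : Fin n) (hij : i ≠ j) (hkl : k ≠ l) (a b : A), i ≠ l ∧ j ≠ k ∧
          r = xg i j hij a * xg k l hkl b * (xg k l hkl b * xg i j hij a)⁻¹) ∨
       (∃ (i j k : Fin n) (hij : i ≠ j) (hjk : j ≠ k) (hik : i ≠ k) (a b : A),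
          r = xg i j hij a * xg j k hjk b *
              (xg j k hjk b * xg i k hik (a * b) * xg i j hij a)⁻¹)}

/-- The Steinberg group `St_n(A)`. -/
abbrev Steinberg (n : ℕ) (A : Type) [NonUnitalRing A] := PresentedGroup (stRels n A)

/-- The generator `x_{ij}(a)` of the Steinberg group. -/
def x {n : ℕ} {A : Type} [NonUnitalRing A] (i j : Fin n) (h : i ≠ j) (a : A) :
    Steinberg n A := PresentedGroup.of (⟨(i, j), h⟩, a)

namespace Stmt9Aux

variable {n : ℕ} {A : Type} [NonUnitalRing A]

lemma pg_eq {α : Type} {rels : Set (FreeGroup α)} {r : FreeGroup α} (h : r ∈ rels) :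
    PresentedGroup.mk rels r = 1 :=
  (QuotientGroup.eq_one_iff r).2 (Subgroup.subset_normalClosure h)

lemma relA1 (i : Fin n) (a b : A) :
    y i a * y i 0 * y i b = y i 0 * y i 0 * y i (a + b) := by
  have h := pg_eq (rels := pRels n A) (Or.inl ⟨i, a, b, rfl⟩)
  simp only [map_mul, map_inv, mul_inv_eq_one] at h
  exact h

lemma relComm {i j : Fin n} (hij : (i : ℕ) + 2 ≤ (j : ℕ)) (a b : A) :
    y i a * y j b = y j b * y i a := by
  have h := pg_eq (rels := pRels n A) (Or.inr (Or.inl ⟨i, j, a, b, hij, rfl⟩))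
  simp only [map_mul, map_inv, mul_inv_eq_one] at h
  exact h

lemma relA2 {i j : Fin n} (hij : (i : ℕ) + 1 = (j : ℕ)) (a b c : A) :
    y i a * y j b * y i c = y j c * y i (b + a * c) * y j a := by
  have h := pg_eq (rels := pRels n A) (Or.inr (Or.inr ⟨i, j, a, b, c, hij, rfl⟩))
  simp only [map_mul, map_inv, mul_inv_eq_one] at h
  exact h

lemma brelComm {i j : Fin n} (hij : (i : ℕ) + 2 ≤ (j : ℕ)) :
    bgen i * bgen j = bgen j * bgen i := by
  have h := pg_eq (rels := bRels n) (Or.inl ⟨i, j, hij, rfl⟩)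
  simp only [map_mul, map_inv, mul_inv_eq_one] at h
  exact h

lemma brelBraid {i j : Fin n} (hij : (i : ℕ) + 1 = (j : ℕ)) :
    bgen i * bgen j * bgen i = bgen j * bgen i * bgen j := by
  have h := pg_eq (rels := bRels n) (Or.inr ⟨i, j, hij, rfl⟩)
  simp only [map_mul, map_inv, mul_inv_eq_one] at h
  exact h

lemma st0 {m : ℕ} (i j : Fin m) (h : i ≠ j) (a b : A) :
    x i j h a * x i j h b = x i j h (a + b) := by
  have h2 := pg_eq (rels := stRels m A) (Or.inl ⟨i, j, h, a, b, rfl⟩)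
  simp only [map_mul, map_inv, mul_inv_eq_one] at h2
  exact h2

lemma st_zero {m : ℕ} (i j : Fin m) (h : i ≠ j) : x i j h (0 : A) = 1 := by
  have h2 := st0 i j h (0 : A) 0
  rw [add_zero] at h2
  exact (mul_eq_left).1 h2

lemma st1 {m : ℕ} {i j k l : Fin m} (hij : i ≠ j) (hkl : k ≠ l) (hil : i ≠ l) (hjk : j ≠ k)
    (a b : A) : x i j hij a * x k l hkl b = x k l hkl b * x i j hij a := by
  have h2 := pg_eq (rels := stRels m A) (Or.inr (Or.inl ⟨i, j, k, l, hij, hkl, a, b, hil, hjk, rfl⟩))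
  simp only [map_mul, map_inv, mul_inv_eq_one] at h2
  exact h2

lemma st2 {m : ℕ} {i j k : Fin m} (hij : i ≠ j) (hjk : j ≠ k) (hik : i ≠ k) (a b : A) :
    x i j hij a * x j k hjk b = x j k hjk b * x i k hik (a * b) * x i j hij a := by
  have h2 := pg_eq (rels := stRels m A) (Or.inr (Or.inr ⟨i, j, k, hij, hjk, hik, a, b, rfl⟩))
  simp only [map_mul, map_inv, mul_inv_eq_one] at h2
  exact h2

end Stmt9Aux

namespace Stmt9Aux

section
variable {G : Type*} [Group G]

/-- Conjugation helper. -/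
def cj (g u : G) : G := g * u * g⁻¹

lemma cj_mul (g u v : G) : cj g (u * v) = cj g u * cj g v := by
  simp only [cj]; group

lemma cj_cj (g h u : G) : cj g (cj h u) = cj (g * h) u := by
  simp only [cj]; group

lemma cj_inv (g u : G) : cj g u⁻¹ = (cj g u)⁻¹ := by
  simp only [cj]; group

lemma cj_one (g : G) : cj g (1 : G) = 1 := by simp [cj]

lemma cj_id (u : G) : cj (1 : G) u = u := by simp [cj]

lemma cj_of_swap {g u v : G} (h : g * u = v * g) : cj g u = v := by
  simp only [cj]; rw [h]; group

lemma cj_swap {g u v : G} (h : cj g u = v) : g * u = v * g := by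
  rw [← h]; simp only [cj]; group

lemma cj_of_commute {g u : G} (h : Commute g u) : cj g u = u :=
  cj_of_swap h.eq

end

variable {n : ℕ} {A : Type} [NonUnitalRing A]

/-- `Y m a` is `y m a` for `m < n`, junk `1` otherwise. -/
def Yw (m : ℕ) (a : A) : PBraid n A := if h : m < n then y ⟨m, h⟩ a else 1

/-- The braid generator. -/
def Tw (m : ℕ) : PBraid n A := Yw m 0

/-- `Z m a = y_m^a (y_m^0)⁻¹`. -/
def Zw (m : ℕ) (a : A) : PBraid n A := Yw m a * (Tw m)⁻¹

lemma N1 {m : ℕ} (hm : m < n) (a b : A) :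
    (Yw m a : PBraid n A) * Tw m * Yw m b = Tw m * Tw m * Yw m (a + b) := by
  simp only [Tw, Yw, dif_pos hm]
  exact relA1 ⟨m, hm⟩ a b

lemma Ncomm {i j : ℕ} (hij : i + 2 ≤ j) (hj : j < n) (a b : A) :
    (Yw i a : PBraid n A) * Yw j b = Yw j b * Yw i a := by
  have hi : i < n := by omega
  simp only [Yw, dif_pos hi, dif_pos hj]
  exact relComm (i := ⟨i, hi⟩) (j := ⟨j, hj⟩) hij a b

lemma N2 {i : ℕ} (h : i + 1 < n) (a b c : A) :
    (Yw i a : PBraid n A) * Yw (i+1) b * Yw i c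
      = Yw (i+1) c * Yw i (b + a * c) * Yw (i+1) a := by
  have hi : i < n := by omega
  simp only [Yw, dif_pos hi, dif_pos h]
  exact relA2 (i := ⟨i, hi⟩) (j := ⟨i+1, h⟩) rfl a b c

lemma zt (m : ℕ) (a : A) : (Zw m a : PBraid n A) * Tw m = Yw m a := by
  simp only [Zw]; group

lemma Zw_zero (m : ℕ) : (Zw m 0 : PBraid n A) = 1 := by
  simp [Zw, Tw]

lemma braidT {i : ℕ} (h : i + 1 < n) :
    (Tw i : PBraid n A) * Tw (i+1) * Tw i = Tw (i+1) * Tw i * Tw (i+1) := by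
  have := N2 (A := A) h 0 0 0
  simpa [Tw] using this

lemma sqY {m : ℕ} (hm : m < n) (a : A) :
    (Tw m : PBraid n A) * Tw m * Yw m a = Yw m a * (Tw m * Tw m) := by
  have := N1 hm a (0 : A)
  simp only [Tw] at this ⊢
  simpa [mul_assoc] using this.symm

lemma z_add {m : ℕ} (hm : m < n) (a b : A) :
    (Zw m a : PBraid n A) * Zw m b = Zw m (a + b) := by
  have key : (Tw m : PBraid n A) * Tw m * (Zw m a * Zw m b)
      = Tw m * Tw m * Zw m (a + b) := by
    calc (Tw m : PBraid n A) * Tw m * (Zw m a * Zw m b)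
        = (Tw m * Tw m * Yw m a) * ((Tw m)⁻¹ * Yw m b * (Tw m)⁻¹) := by
          simp only [Zw]; group
      _ = (Yw m a * (Tw m * Tw m)) * ((Tw m)⁻¹ * Yw m b * (Tw m)⁻¹) := by rw [sqY hm]
      _ = (Yw m a * Tw m * Yw m b) * (Tw m)⁻¹ := by group
      _ = (Tw m * Tw m * Yw m (a + b)) * (Tw m)⁻¹ := by rw [N1 hm]
      _ = Tw m * Tw m * Zw m (a + b) := by simp only [Zw]; group
  exact mul_left_cancel key

lemma conj2Y {i : ℕ} (h : i + 1 < n) (a : A) :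
    (Tw i : PBraid n A) * Tw (i+1) * Yw i a = Yw (i+1) a * (Tw i * Tw (i+1)) := by
  have := N2 (A := A) h 0 0 a
  simpa [Tw, mul_assoc] using this

lemma conj5Y {i : ℕ} (h : i + 1 < n) (a : A) :
    (Tw (i+1) : PBraid n A) * Tw i * Yw (i+1) a = Yw i a * (Tw (i+1) * Tw i) := by
  have := N2 (A := A) h a 0 0
  simp only [Tw] at this ⊢
  simpa [mul_assoc] using this.symm

lemma N3 {i : ℕ} (h : i + 1 < n) (b : A) :
    (Tw i : PBraid n A) * Yw (i+1) b * Tw i = Tw (i+1) * Yw i b * Tw (i+1) := by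
  have := N2 (A := A) h 0 b 0
  simpa [Tw] using this

lemma conj2Z {i : ℕ} (h : i + 1 < n) (a : A) :
    cj ((Tw i : PBraid n A) * Tw (i+1)) (Zw i a) = Zw (i+1) a := by
  have h1 : cj ((Tw i : PBraid n A) * Tw (i+1)) (Yw i a) = Yw (i+1) a :=
    cj_of_swap (by simpa [mul_assoc] using conj2Y h a)
  have h2 : cj ((Tw i : PBraid n A) * Tw (i+1)) (Tw i) = Tw (i+1) :=
    cj_of_swap (by simpa [mul_assoc] using braidT h)
  calc cj ((Tw i : PBraid n A) * Tw (i+1)) (Zw i a)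
      = cj (Tw i * Tw (i+1)) (Yw i a) * (cj (Tw i * Tw (i+1)) (Tw i))⁻¹ := by
        simp only [Zw, cj_mul, cj_inv]
    _ = Yw (i+1) a * (Tw (i+1))⁻¹ := by rw [h1, h2]
    _ = Zw (i+1) a := rfl

lemma conj5Z {i : ℕ} (h : i + 1 < n) (a : A) :
    cj ((Tw (i+1) : PBraid n A) * Tw i) (Zw (i+1) a) = Zw i a := by
  have h1 : cj ((Tw (i+1) : PBraid n A) * Tw i) (Yw (i+1) a) = Yw i a :=
    cj_of_swap (by simpa [mul_assoc] using conj5Y h a)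
  have h2 : cj ((Tw (i+1) : PBraid n A) * Tw i) (Tw (i+1)) = Tw i := by
    refine cj_of_swap ?_
    have := (braidT (A := A) h).symm
    simpa [mul_assoc] using this
  calc cj ((Tw (i+1) : PBraid n A) * Tw i) (Zw (i+1) a)
      = cj (Tw (i+1) * Tw i) (Yw (i+1) a) * (cj (Tw (i+1) * Tw i) (Tw (i+1)))⁻¹ := by
        simp only [Zw, cj_mul, cj_inv]
    _ = Yw i a * (Tw i)⁻¹ := by rw [h1, h2]
    _ = Zw i a := rfl

lemma C3 {i : ℕ} (h : i + 1 < n) (b : A) :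
    cj (Tw i : PBraid n A) (Zw (i+1) b) = cj (Tw (i+1)) (Zw i b) := by
  calc cj (Tw i : PBraid n A) (Zw (i+1) b)
      = (Tw i * Yw (i+1) b * Tw i) * ((Tw i)⁻¹ * (Tw (i+1))⁻¹ * (Tw i)⁻¹) := by
        simp only [cj, Zw]; group
    _ = (Tw (i+1) * Yw i b * Tw (i+1)) * ((Tw i)⁻¹ * (Tw (i+1))⁻¹ * (Tw i)⁻¹) := by
        rw [N3 h]
    _ = Tw (i+1) * Yw i b * Tw (i+1) * (Tw i * Tw (i+1) * Tw i)⁻¹ := by group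
    _ = Tw (i+1) * Yw i b * Tw (i+1) * (Tw (i+1) * Tw i * Tw (i+1))⁻¹ := by rw [braidT h]
    _ = cj (Tw (i+1)) (Zw i b) := by simp only [cj, Zw]; group

lemma C4 {i : ℕ} (h : i + 1 < n) (a : A) :
    cj ((Tw (i+1) : PBraid n A) * Tw (i+1)) (Zw i a) = Zw i a := by
  rw [← cj_cj]
  calc cj (Tw (i+1) : PBraid n A) (cj (Tw (i+1)) (Zw i a))
      = cj (Tw (i+1)) (cj (Tw i) (Zw (i+1) a)) := by rw [C3 h]
    _ = cj (Tw (i+1) * Tw i) (Zw (i+1) a) := by rw [cj_cj]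
    _ = Zw i a := conj5Z h a

lemma C5 {i : ℕ} (h : i + 1 < n) (a : A) :
    cj ((Tw i : PBraid n A) * Tw i) (Zw (i+1) a) = Zw (i+1) a := by
  rw [← cj_cj]
  calc cj (Tw i : PBraid n A) (cj (Tw i) (Zw (i+1) a))
      = cj (Tw i) (cj (Tw (i+1)) (Zw i a)) := by rw [C3 h]
    _ = cj (Tw i * Tw (i+1)) (Zw i a) := by rw [cj_cj]
    _ = Zw (i+1) a := conj2Z h a

lemma sqZ_self {m : ℕ} (hm : m < n) (a : A) :
    cj ((Tw m : PBraid n A) * Tw m) (Zw m a) = Zw m a := by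
  have h1 : cj ((Tw m : PBraid n A) * Tw m) (Yw m a) = Yw m a :=
    cj_of_swap (by simpa [mul_assoc] using sqY hm a)
  have h2 : cj ((Tw m : PBraid n A) * Tw m) (Tw m) = Tw m :=
    cj_of_swap (by group)
  calc cj ((Tw m : PBraid n A) * Tw m) (Zw m a)
      = cj (Tw m * Tw m) (Yw m a) * (cj (Tw m * Tw m) (Tw m))⁻¹ := by
        simp only [Zw, cj_mul, cj_inv]
    _ = Yw m a * (Tw m)⁻¹ := by rw [h1, h2]
    _ = Zw m a := rfl

lemma commYY {i j : ℕ} (hij : i + 2 ≤ j) (hj : j < n) (a b : A) :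
    Commute (Yw i a : PBraid n A) (Yw j b) := Ncomm hij hj a b

lemma commYZ {i j : ℕ} (hij : i + 2 ≤ j) (hj : j < n) (a b : A) :
    Commute (Yw i a : PBraid n A) (Zw j b) :=
  (commYY hij hj a b).mul_right ((commYY hij hj a 0).inv_right)

lemma commZZ {i j : ℕ} (hij : i + 2 ≤ j) (hj : j < n) (a b : A) :
    Commute (Zw i a : PBraid n A) (Zw j b) :=
  (commYZ hij hj a b).mul_left ((commYZ hij hj 0 b).inv_left)

lemma commTZ {i j : ℕ} (hij : i + 2 ≤ j) (hj : j < n) (b : A) :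
    Commute (Tw i : PBraid n A) (Zw j b) := commYZ hij hj 0 b

lemma commTZ' {i j : ℕ} (hij : i + 2 ≤ j) (hj : j < n) (b : A) :
    Commute (Tw j : PBraid n A) (Zw i b) :=
  ((commYY hij hj b 0).symm.mul_right ((commYY hij hj 0 0).symm.inv_right))

end Stmt9Aux

namespace Stmt9Aux

variable {n : ℕ} {A : Type} [NonUnitalRing A]

/-- `T_m²` commutes with every `Z_j(a)`. -/
lemma sqZ {m j : ℕ} (hm : m < n) (hj : j < n) (a : A) :
    cj ((Tw m : PBraid n A) * Tw m) (Zw j a) = Zw j a := by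
  rcases Nat.lt_trichotomy m j with hlt | heq | hgt
  · rcases Nat.lt_or_ge (m + 1) j with h2 | h2
    · exact cj_of_commute ((commTZ (by omega) hj a).mul_left (commTZ (by omega) hj a))
    · have : j = m + 1 := by omega
      subst this
      exact C5 hj a
  · subst heq; exact sqZ_self hm a
  · rcases Nat.lt_or_ge (j + 1) m with h2 | h2
    · exact cj_of_commute ((commTZ' (by omega) hm a).mul_left (commTZ' (by omega) hm a))
    · have : m = j + 1 := by omega
      subst this
      exact C4 hm a

/-- Conjugation of `Z` by `T m` and by `(T m)⁻¹` agree. -/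
lemma cj_invT {m j : ℕ} (hm : m < n) (hj : j < n) (a : A) :
    cj ((Tw m : PBraid n A))⁻¹ (Zw j a) = cj (Tw m) (Zw j a) := by
  have h2 := congrArg (cj ((Tw m : PBraid n A))⁻¹) (sqZ hm hj a)
  rw [cj_cj, show ((Tw m : PBraid n A))⁻¹ * (Tw m * Tw m) = Tw m by group] at h2
  exact h2.symm

lemma A2z {i : ℕ} (h : i + 1 < n) (a b c : A) :
    (Zw i a : PBraid n A) * Tw i * Zw (i+1) b * Tw (i+1) * Zw i c * Tw i
      = Zw (i+1) c * Tw (i+1) * Zw i (b + a * c) * Tw i * Zw (i+1) a * Tw (i+1) := by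
  have h2 := N2 (A := A) h a b c
  simp only [← zt] at h2
  simpa [mul_assoc] using h2

lemma s5e {i : ℕ} (h : i + 1 < n) (b : A) :
    (Tw i : PBraid n A) * Zw (i+1) b = Tw (i+1) * Zw i b * (Tw (i+1))⁻¹ * Tw i := by
  have := cj_swap (C3 (A := A) h b)
  rw [this]; simp only [cj]

lemma s3e {i : ℕ} (h : i + 1 < n) (c : A) :
    (Tw i : PBraid n A) * Tw (i+1) * Zw i c = Zw (i+1) c * (Tw i * Tw (i+1)) :=
  cj_swap (conj2Z h c)

lemma s6e {i : ℕ} (h : i + 1 < n) (a : A) :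
    (Tw (i+1) : PBraid n A) * Tw (i+1) * Zw i a = Zw i a * (Tw (i+1) * Tw (i+1)) :=
  cj_swap (C4 h a)

/-- The master relation (M'). -/
lemma Mrel {i : ℕ} (h : i + 1 < n) (a b c : A) :
    (Zw i a : PBraid n A) * cj (Tw (i+1)) (Zw i b) * Zw (i+1) c
      = Zw (i+1) c * cj (Tw (i+1)) (Zw i (b + a * c)) * Zw i a := by
  simp only [cj]
  have key1 : (Zw i a : PBraid n A) * Tw i * Zw (i+1) b * Tw (i+1) * Zw i c * Tw i
      = Zw i a * (Tw (i+1) * Zw i b * (Tw (i+1))⁻¹) * Zw (i+1) c * (Tw i * Tw (i+1) * Tw i) := by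
    calc (Zw i a : PBraid n A) * Tw i * Zw (i+1) b * Tw (i+1) * Zw i c * Tw i
        = Zw i a * (Tw i * Zw (i+1) b) * (Tw (i+1) * Zw i c * Tw i) := by group
      _ = Zw i a * (Tw (i+1) * Zw i b * (Tw (i+1))⁻¹ * Tw i) * (Tw (i+1) * Zw i c * Tw i) := by
          rw [s5e h]
      _ = Zw i a * (Tw (i+1) * Zw i b * (Tw (i+1))⁻¹) * (Tw i * Tw (i+1) * Zw i c) * Tw i := by
          group
      _ = Zw i a * (Tw (i+1) * Zw i b * (Tw (i+1))⁻¹) * (Zw (i+1) c * (Tw i * Tw (i+1))) * Tw i := by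
          rw [s3e h]
      _ = Zw i a * (Tw (i+1) * Zw i b * (Tw (i+1))⁻¹) * Zw (i+1) c * (Tw i * Tw (i+1) * Tw i) := by
          group
  have key2 : (Zw (i+1) c : PBraid n A) * Tw (i+1) * Zw i (b + a * c) * Tw i * Zw (i+1) a * Tw (i+1)
      = Zw (i+1) c * (Tw (i+1) * Zw i (b + a * c) * (Tw (i+1))⁻¹) * Zw i a * (Tw i * Tw (i+1) * Tw i) := by
    calc (Zw (i+1) c : PBraid n A) * Tw (i+1) * Zw i (b + a * c) * Tw i * Zw (i+1) a * Tw (i+1)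
        = Zw (i+1) c * (Tw (i+1) * Zw i (b + a * c) * (Tw (i+1))⁻¹) * Tw (i+1) * (Tw i * Zw (i+1) a) * Tw (i+1) := by
          group
      _ = Zw (i+1) c * (Tw (i+1) * Zw i (b + a * c) * (Tw (i+1))⁻¹) * Tw (i+1) * (Tw (i+1) * Zw i a * (Tw (i+1))⁻¹ * Tw i) * Tw (i+1) := by
          rw [s5e h]
      _ = Zw (i+1) c * (Tw (i+1) * Zw i (b + a * c) * (Tw (i+1))⁻¹) * (Tw (i+1) * Tw (i+1) * Zw i a) * ((Tw (i+1))⁻¹ * Tw i * Tw (i+1)) := by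
          group
      _ = Zw (i+1) c * (Tw (i+1) * Zw i (b + a * c) * (Tw (i+1))⁻¹) * (Zw i a * (Tw (i+1) * Tw (i+1))) * ((Tw (i+1))⁻¹ * Tw i * Tw (i+1)) := by
          rw [s6e h]
      _ = Zw (i+1) c * (Tw (i+1) * Zw i (b + a * c) * (Tw (i+1))⁻¹) * Zw i a * (Tw (i+1) * Tw i * Tw (i+1)) := by
          group
      _ = Zw (i+1) c * (Tw (i+1) * Zw i (b + a * c) * (Tw (i+1))⁻¹) * Zw i a * (Tw i * Tw (i+1) * Tw i) := by
          rw [braidT h]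
  exact mul_right_cancel (key1.symm.trans ((A2z h a b c).trans key2))

lemma Mcomm1 {i : ℕ} (h : i + 1 < n) (a b : A) :
    (Zw i a : PBraid n A) * cj (Tw (i+1)) (Zw i b)
      = cj (Tw (i+1)) (Zw i b) * Zw i a := by
  have := Mrel (A := A) h a b 0
  simpa [Zw_zero, cj_one] using this

lemma Mcomm2 {i : ℕ} (h : i + 1 < n) (b c : A) :
    cj ((Tw (i+1) : PBraid n A)) (Zw i b) * Zw (i+1) c
      = Zw (i+1) c * cj (Tw (i+1)) (Zw i b) := by
  have := Mrel (A := A) h 0 b c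
  simpa [Zw_zero, cj_one] using this

lemma Mst2 {i : ℕ} (h : i + 1 < n) (a c : A) :
    (Zw i a : PBraid n A) * Zw (i+1) c
      = Zw (i+1) c * cj (Tw (i+1)) (Zw i (a * c)) * Zw i a := by
  have := Mrel (A := A) h a 0 c
  simpa [Zw_zero, cj_one] using this

end Stmt9Aux

namespace Stmt9Aux

variable {n : ℕ} {A : Type} [NonUnitalRing A]

lemma commTT {i j : ℕ} (hij : i + 2 ≤ j) (hj : j < n) :
    Commute (Tw i : PBraid n A) (Tw j) := commYY hij hj 0 0

/-- The ladder word `T (e-1) * ⋯ * T s` (or `1` if `e ≤ s`). -/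
def asc (s : ℕ) : ℕ → PBraid n A
  | 0 => 1
  | e+1 => if s ≤ e then Tw e * asc s e else 1

lemma asc_of_le {s e : ℕ} (h : e ≤ s) : (asc s e : PBraid n A) = 1 := by
  cases e with
  | zero => rfl
  | succ e => exact if_neg (by omega)

lemma asc_succ {s e : ℕ} (h : s ≤ e) : (asc s (e+1) : PBraid n A) = Tw e * asc s e :=
  if_pos h

/-- The Steinberg-type elements inside the parametrized braid group. -/
def XX (j k : ℕ) (a : A) : PBraid n A :=
  if j < k then cj (asc (j+1) k) (Zw j a) else cj (asc k j) (Zw k a)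

lemma XX_adj (j : ℕ) (a : A) : (XX j (j+1) a : PBraid n A) = Zw j a := by
  rw [XX, if_pos (Nat.lt_succ_self j), asc_of_le le_rfl, cj_id]

lemma XX_up {j k : ℕ} (h : j < k) (a : A) :
    (XX j (k+1) a : PBraid n A) = cj (Tw k) (XX j k a) := by
  rw [XX, if_pos (by omega : j < k + 1), XX, if_pos h, asc_succ (by omega : j + 1 ≤ k), ← cj_cj]

lemma XX_down_base (k : ℕ) (a : A) : (XX (k+1) k a : PBraid n A) = cj (Tw k) (Zw k a) := by
  rw [XX, if_neg (by omega), asc_succ le_rfl, asc_of_le le_rfl, mul_one]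

lemma XX_down {j k : ℕ} (h : k < j) (a : A) :
    (XX (j+1) k a : PBraid n A) = cj (Tw j) (XX j k a) := by
  rw [XX, if_neg (by omega), XX, if_neg (by omega), asc_succ (by omega : k ≤ j), ← cj_cj]

/-- Adjacent transposition on `ℕ`. -/
def sw (i m : ℕ) : ℕ := if m = i then i + 1 else if m = i + 1 then i else m

lemma sw_low (i : ℕ) : sw i i = i + 1 := by simp [sw]

lemma sw_high (i : ℕ) : sw i (i+1) = i := by
  rw [sw, if_neg (by omega), if_pos rfl]

lemma sw_ne {i m : ℕ} (h1 : m ≠ i) (h2 : m ≠ i + 1) : sw i m = m := by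
  rw [sw, if_neg h1, if_neg h2]

lemma comm_T_asc {m s e : ℕ} (hm : e + 1 ≤ m) (hn : m < n) :
    Commute (Tw m : PBraid n A) (asc s e) := by
  induction e with
  | zero => exact Commute.one_right _
  | succ e ih =>
    rw [asc]
    split
    · exact ((commTT (by omega) hn).symm).mul_right (ih (by omega))
    · exact Commute.one_right _

lemma comm_T_cjascZ {m s e j : ℕ} (hm : e + 1 ≤ m) (hmj : j + 2 ≤ m) (hn : m < n) (a : A) :
    Commute (Tw m : PBraid n A) (cj (asc s e) (Zw j a)) := by
  have h1 : Commute (Tw m : PBraid n A) (asc s e) := comm_T_asc hm hn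
  have h2 : Commute (Tw m : PBraid n A) (Zw j a) := commTZ' hmj hn a
  exact (h1.mul_right h2).mul_right h1.inv_right

/-- `T e ^ 2` commutes with the ascending conjugate of `Z j` ending at `e`. -/
lemma sqXXup {j : ℕ} : ∀ e : ℕ, j + 1 ≤ e → e < n → ∀ a : A,
    cj ((Tw e : PBraid n A) * Tw e) (cj (asc (j+1) e) (Zw j a)) = cj (asc (j+1) e) (Zw j a) := by
  intro e he
  induction e, he using Nat.le_induction with
  | base =>
    intro hn a
    rw [asc_of_le le_rfl, cj_id]
    exact sqZ hn (by omega) a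
  | succ e he ih =>
    intro hn a
    have hbe : e + 1 < n := hn
    have key : (Tw (e+1) : PBraid n A) * Tw (e+1) * Tw e
        = Tw e * Tw (e+1) * (Tw e * Tw e) * (Tw (e+1))⁻¹ := by
      have h2 : ((Tw (e+1) : PBraid n A) * Tw (e+1) * Tw e) * Tw (e+1)
          = (Tw e * Tw (e+1) * (Tw e * Tw e) * (Tw (e+1))⁻¹) * Tw (e+1) := by
        calc ((Tw (e+1) : PBraid n A) * Tw (e+1) * Tw e) * Tw (e+1)
            = Tw (e+1) * (Tw (e+1) * Tw e * Tw (e+1)) := by group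
          _ = Tw (e+1) * (Tw e * Tw (e+1) * Tw e) := by rw [← braidT hbe]
          _ = (Tw e * Tw (e+1) * (Tw e * Tw e) * (Tw (e+1))⁻¹) * Tw (e+1) := by
              calc (Tw (e+1) : PBraid n A) * (Tw e * Tw (e+1) * Tw e)
                  = (Tw (e+1) * Tw e * Tw (e+1)) * Tw e := by group
                _ = (Tw e * Tw (e+1) * Tw e) * Tw e := by rw [← braidT hbe]
                _ = (Tw e * Tw (e+1) * (Tw e * Tw e) * (Tw (e+1))⁻¹) * Tw (e+1) := by group
      exact mul_right_cancel h2
    have hcom : Commute (Tw (e+1) : PBraid n A) (cj (asc (j+1) e) (Zw j a)) :=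
      comm_T_cjascZ (by omega) (by omega) hn a
    rw [asc_succ (by omega : j + 1 ≤ e)]
    calc cj ((Tw (e+1) : PBraid n A) * Tw (e+1)) (cj (Tw e * asc (j+1) e) (Zw j a))
        = cj ((Tw (e+1) * Tw (e+1)) * (Tw e * asc (j+1) e)) (Zw j a) := by rw [cj_cj]
      _ = cj ((Tw e * Tw (e+1)) * ((Tw e * Tw e) * ((Tw (e+1))⁻¹ * asc (j+1) e))) (Zw j a) := by
          rw [show ((Tw (e+1) : PBraid n A) * Tw (e+1)) * (Tw e * asc (j+1) e)
              = (Tw e * Tw (e+1)) * ((Tw e * Tw e) * ((Tw (e+1))⁻¹ * asc (j+1) e)) from by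
            calc ((Tw (e+1) : PBraid n A) * Tw (e+1)) * (Tw e * asc (j+1) e)
                = (Tw (e+1) * Tw (e+1) * Tw e) * asc (j+1) e := by group
              _ = (Tw e * Tw (e+1) * (Tw e * Tw e) * (Tw (e+1))⁻¹) * asc (j+1) e := by rw [key]
              _ = (Tw e * Tw (e+1)) * ((Tw e * Tw e) * ((Tw (e+1))⁻¹ * asc (j+1) e)) := by group]
      _ = cj (Tw e * Tw (e+1)) (cj ((Tw e * Tw e)) (cj ((Tw (e+1))⁻¹) (cj (asc (j+1) e) (Zw j a)))) := by
          rw [← cj_cj (g := (Tw e : PBraid n A) * Tw (e+1))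
                (h := (Tw e * Tw e) * ((Tw (e+1))⁻¹ * asc (j+1) e)),
              ← cj_cj (g := (Tw e : PBraid n A) * Tw e)
                (h := (Tw (e+1))⁻¹ * asc (j+1) e),
              ← cj_cj (g := ((Tw (e+1) : PBraid n A))⁻¹) (h := asc (j+1) e)]
      _ = cj (Tw e * Tw (e+1)) (cj ((Tw e * Tw e)) (cj (asc (j+1) e) (Zw j a))) := by
          rw [cj_of_commute hcom.inv_left]
      _ = cj (Tw e * Tw (e+1)) (cj (asc (j+1) e) (Zw j a)) := by rw [ih (by omega) a]
      _ = cj (Tw e) (cj (Tw (e+1)) (cj (asc (j+1) e) (Zw j a))) := by rw [← cj_cj]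
      _ = cj (Tw e) (cj (asc (j+1) e) (Zw j a)) := by rw [cj_of_commute hcom]
      _ = cj (Tw e * asc (j+1) e) (Zw j a) := by rw [cj_cj]
end Stmt9Aux

namespace Stmt9Aux

variable {n : ℕ} {A : Type} [NonUnitalRing A]

lemma braid_sq {e : ℕ} (hbe : e + 1 < n) :
    (Tw (e+1) : PBraid n A) * Tw (e+1) * Tw e
      = Tw e * Tw (e+1) * (Tw e * Tw e) * (Tw (e+1))⁻¹ := by
  have h2 : ((Tw (e+1) : PBraid n A) * Tw (e+1) * Tw e) * Tw (e+1)
      = (Tw e * Tw (e+1) * (Tw e * Tw e) * (Tw (e+1))⁻¹) * Tw (e+1) := by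
    calc ((Tw (e+1) : PBraid n A) * Tw (e+1) * Tw e) * Tw (e+1)
        = Tw (e+1) * (Tw (e+1) * Tw e * Tw (e+1)) := by group
      _ = Tw (e+1) * (Tw e * Tw (e+1) * Tw e) := by rw [← braidT hbe]
      _ = (Tw (e+1) * Tw e * Tw (e+1)) * Tw e := by group
      _ = (Tw e * Tw (e+1) * Tw e) * Tw e := by rw [← braidT hbe]
      _ = (Tw e * Tw (e+1) * (Tw e * Tw e) * (Tw (e+1))⁻¹) * Tw (e+1) := by group
  exact mul_right_cancel h2

lemma sqXXdown {k : ℕ} : ∀ e : ℕ, k ≤ e → e < n → k < n → ∀ a : A,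
    cj ((Tw e : PBraid n A) * Tw e) (cj (asc k e) (Zw k a)) = cj (asc k e) (Zw k a) := by
  intro e he
  induction e, he using Nat.le_induction with
  | base =>
    intro hn hk a
    rw [asc_of_le le_rfl, cj_id]
    exact sqZ hn hk a
  | succ e he ih =>
    intro hn hk a
    have hbe : e + 1 < n := hn
    rcases Nat.lt_or_ge k e with hke | hke
    · -- generic step, k < e
      have hcom : Commute (Tw (e+1) : PBraid n A) (cj (asc k e) (Zw k a)) :=
        comm_T_cjascZ (by omega) (by omega) hn a
      rw [asc_succ he]
      calc cj ((Tw (e+1) : PBraid n A) * Tw (e+1)) (cj (Tw e * asc k e) (Zw k a))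
          = cj ((Tw (e+1) * Tw (e+1)) * (Tw e * asc k e)) (Zw k a) := by rw [cj_cj]
        _ = cj ((Tw e * Tw (e+1)) * ((Tw e * Tw e) * ((Tw (e+1))⁻¹ * asc k e))) (Zw k a) := by
            rw [show ((Tw (e+1) : PBraid n A) * Tw (e+1)) * (Tw e * asc k e)
                = (Tw e * Tw (e+1)) * ((Tw e * Tw e) * ((Tw (e+1))⁻¹ * asc k e)) from by
              calc ((Tw (e+1) : PBraid n A) * Tw (e+1)) * (Tw e * asc k e)
                  = (Tw (e+1) * Tw (e+1) * Tw e) * asc k e := by group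
                _ = (Tw e * Tw (e+1) * (Tw e * Tw e) * (Tw (e+1))⁻¹) * asc k e := by
                    rw [braid_sq hbe]
                _ = (Tw e * Tw (e+1)) * ((Tw e * Tw e) * ((Tw (e+1))⁻¹ * asc k e)) := by group]
        _ = cj (Tw e * Tw (e+1))
              (cj ((Tw e * Tw e)) (cj ((Tw (e+1))⁻¹) (cj (asc k e) (Zw k a)))) := by
            rw [← cj_cj (g := (Tw e : PBraid n A) * Tw (e+1))
                  (h := (Tw e * Tw e) * ((Tw (e+1))⁻¹ * asc k e)),
                ← cj_cj (g := (Tw e : PBraid n A) * Tw e) (h := (Tw (e+1))⁻¹ * asc k e),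
                ← cj_cj (g := ((Tw (e+1) : PBraid n A))⁻¹) (h := asc k e)]
        _ = cj (Tw e * Tw (e+1)) (cj ((Tw e * Tw e)) (cj (asc k e) (Zw k a))) := by
            rw [cj_of_commute hcom.inv_left]
        _ = cj (Tw e * Tw (e+1)) (cj (asc k e) (Zw k a)) := by rw [ih (by omega) hk a]
        _ = cj (Tw e) (cj (Tw (e+1)) (cj (asc k e) (Zw k a))) := by rw [← cj_cj]
        _ = cj (Tw e) (cj (asc k e) (Zw k a)) := by rw [cj_of_commute hcom]
        _ = cj (Tw e * asc k e) (Zw k a) := by rw [cj_cj]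
    · -- first step, e = k
      obtain rfl : e = k := by omega
      rw [asc_succ le_rfl, asc_of_le le_rfl, mul_one]
      calc cj ((Tw (e+1) : PBraid n A) * Tw (e+1)) (cj (Tw e) (Zw e a))
          = cj ((Tw (e+1) * Tw (e+1)) * Tw e) (Zw e a) := by rw [cj_cj]
        _ = cj ((Tw e * Tw (e+1)) * ((Tw e * Tw e) * (Tw (e+1))⁻¹)) (Zw e a) := by
            rw [braid_sq hbe]; rw [show (Tw e : PBraid n A) * Tw (e+1) * (Tw e * Tw e) * (Tw (e+1))⁻¹
              = (Tw e * Tw (e+1)) * ((Tw e * Tw e) * (Tw (e+1))⁻¹) from by group]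
        _ = cj (Tw e * Tw (e+1)) (cj (Tw e * Tw e) (cj ((Tw (e+1))⁻¹) (Zw e a))) := by
            rw [← cj_cj (g := (Tw e : PBraid n A) * Tw (e+1))
                  (h := (Tw e * Tw e) * (Tw (e+1))⁻¹),
                ← cj_cj (g := (Tw e : PBraid n A) * Tw e) (h := ((Tw (e+1))⁻¹ : PBraid n A))]
        _ = cj (Tw e * Tw (e+1)) (cj (Tw e * Tw e) (cj (Tw (e+1)) (Zw e a))) := by
            rw [cj_invT hbe hk]
        _ = cj (Tw e * Tw (e+1)) (cj (Tw e * Tw e) (cj (Tw e) (Zw (e+1) a))) := by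
            rw [← C3 hbe]
        _ = cj (Tw e * Tw (e+1)) (cj (Tw e) (cj (Tw e * Tw e) (Zw (e+1) a))) := by
            simp only [cj_cj]; congr 1; group
        _ = cj (Tw e * Tw (e+1)) (cj (Tw e) (Zw (e+1) a)) := by rw [sqZ hk hbe]
        _ = cj (Tw e * Tw (e+1)) (cj (Tw (e+1)) (Zw e a)) := by rw [C3 hbe]
        _ = cj (Tw e) (cj ((Tw (e+1)) * Tw (e+1)) (Zw e a)) := by
            simp only [cj_cj]; congr 1; group
        _ = cj (Tw e) (Zw e a) := by rw [sqZ hbe hk]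

end Stmt9Aux

namespace Stmt9Aux

variable {n : ℕ} {A : Type} [NonUnitalRing A]

lemma conjP : ∀ (d : ℕ), ∀ (i j k : ℕ) (a : A), i < n → j ≤ n → k ≤ n → j ≠ k →
    j - k + (k - j) ≤ d →
    cj (Tw i : PBraid n A) (XX j k a) = XX (sw i j) (sw i k) a := by
  intro d
  induction d with
  | zero =>
    intro i j k a hi hj hk hjk hd
    exact absurd hd (by omega)
  | succ d ih =>
    intro i j k a hi hj hk hjk hd
    rcases Nat.lt_or_ge j k with hlt | hge
    · -- j < k
      rcases Nat.lt_or_ge (j+1) k with h2 | h2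
      · -- gap ≥ 2
        obtain ⟨k', rfl⟩ : ∃ k', k = k' + 1 := ⟨k - 1, by omega⟩
        have hjk' : j < k' := by omega
        have hk'n : k' < n := by omega
        rw [XX_up hjk']
        rcases Nat.lt_trichotomy i k' with hik | hik | hik
        · rcases Nat.lt_or_ge (i+1) k' with hik2 | hik2
          · -- i ≤ k' - 2
            have e2 : sw i k' = k' := sw_ne (by omega) (by omega)
            have e3 : sw i (k'+1) = k' + 1 := sw_ne (by omega) (by omega)
            have hsw : sw i j < k' := by simp only [sw]; split_ifs <;> omega
            have hti : Commute (Tw i : PBraid n A) (Tw k') := commTT (by omega) hk'n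
            rw [e3]
            calc cj (Tw i : PBraid n A) (cj (Tw k') (XX j k' a))
                = cj (Tw i * Tw k') (XX j k' a) := by rw [cj_cj]
              _ = cj (Tw k' * Tw i) (XX j k' a) := by rw [hti.eq]
              _ = cj (Tw k') (cj (Tw i) (XX j k' a)) := by rw [← cj_cj]
              _ = cj (Tw k') (XX (sw i j) (sw i k') a) := by
                  rw [ih i j k' a hi hj (by omega) (by omega) (by omega)]
              _ = cj (Tw k') (XX (sw i j) k' a) := by rw [e2]
              _ = XX (sw i j) (k'+1) a := (XX_up hsw a).symm
          · -- i = k' - 1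
            obtain rfl : k' = i + 1 := by omega
            have hb : i + 1 < n := hk'n
            rcases Nat.lt_or_ge j i with hji | hji
            · -- j < i : braid juggle
              have e1 : sw i j = j := sw_ne (by omega) (by omega)
              have e3 : sw i (i+1+1) = i+2 := sw_ne (by omega) (by omega)
              rw [e1, e3, XX_up (show j < i from hji)]
              calc cj (Tw i : PBraid n A) (cj (Tw (i+1)) (cj (Tw i) (XX j i a)))
                  = cj (Tw i * Tw (i+1) * Tw i) (XX j i a) := by
                    simp only [cj_cj]; all_goals (congr 1; group)
                _ = cj (Tw (i+1) * Tw i * Tw (i+1)) (XX j i a) := by rw [braidT hb]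
                _ = cj (Tw (i+1) * Tw i) (cj (Tw (i+1)) (XX j i a)) := by
                    simp only [cj_cj]; all_goals (congr 1; group)
                _ = cj (Tw (i+1) * Tw i) (XX (sw (i+1) j) (sw (i+1) i) a) := by
                    rw [ih (i+1) j i a hb hj (by omega) (by omega) (by omega)]
                _ = cj (Tw (i+1) * Tw i) (XX j i a) := by
                    rw [sw_ne (show j ≠ i+1 by omega) (show j ≠ i+1+1 by omega),
                      sw_ne (show i ≠ i+1 by omega) (show i ≠ i+1+1 by omega)]
                _ = cj (Tw (i+1)) (cj (Tw i) (XX j i a)) := by rw [← cj_cj]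
                _ = cj (Tw (i+1)) (XX (sw i j) (sw i i) a) := by
                    rw [ih i j i a hi hj (by omega) (by omega) (by omega)]
                _ = cj (Tw (i+1)) (XX j (i+1) a) := by rw [e1, sw_low]
                _ = XX j (i+2) a := (XX_up (show j < i+1 by omega) a).symm
            · -- j = i
              obtain rfl : j = i := by omega
              rw [sw_low, sw_ne (show j+1+1 ≠ j by omega) (show j+1+1 ≠ j+1 by omega),
                XX_adj, cj_cj, conj2Z hb]
              exact (XX_adj (j+1) a).symm
        · -- i = k'
          rw [hik]
          have hXd : (XX j k' a : PBraid n A) = cj (asc (j+1) k') (Zw j a) := by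
            rw [XX, if_pos hjk']
          rw [sw_ne (show j ≠ k' by omega) (show j ≠ k'+1 by omega), sw_high, hXd, cj_cj,
            sqXXup k' (by omega) (by omega) a, ← hXd]
        · -- i > k'
          rcases Nat.lt_or_ge (k'+1) i with hik2 | hik2
          · -- i ≥ k' + 2
            have e2 : sw i k' = k' := sw_ne (by omega) (by omega)
            have e3 : sw i (k'+1) = k' + 1 := sw_ne (by omega) (by omega)
            have e1 : sw i j = j := sw_ne (by omega) (by omega)
            have hti : Commute (Tw k' : PBraid n A) (Tw i) := commTT (by omega) hi
            rw [e1, e3]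
            calc cj (Tw i : PBraid n A) (cj (Tw k') (XX j k' a))
                = cj (Tw i * Tw k') (XX j k' a) := by rw [cj_cj]
              _ = cj (Tw k' * Tw i) (XX j k' a) := by rw [hti.symm.eq]
              _ = cj (Tw k') (cj (Tw i) (XX j k' a)) := by rw [← cj_cj]
              _ = cj (Tw k') (XX (sw i j) (sw i k') a) := by
                  rw [ih i j k' a hi hj (by omega) (by omega) (by omega)]
              _ = cj (Tw k') (XX j k' a) := by rw [e1, e2]
              _ = XX j (k'+1) a := (XX_up hjk' a).symm
          · -- i = k' + 1
            obtain rfl : i = k' + 1 := by omega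
            rw [sw_ne (show j ≠ k'+1 by omega) (show j ≠ k'+1+1 by omega), sw_low,
              ← XX_up hjk', XX_up (show j < k'+1 by omega)]
      · -- k = j + 1
        obtain rfl : k = j + 1 := by omega
        have hjn : j < n := by omega
        rw [XX_adj]
        rcases Nat.lt_trichotomy i j with hij | hij | hij
        · rcases Nat.lt_or_ge (i+1) j with hij2 | hij2
          · -- i ≤ j - 2
            rw [sw_ne (show j ≠ i by omega) (show j ≠ i+1 by omega),
              sw_ne (show j+1 ≠ i by omega) (show j+1 ≠ i+1 by omega), XX_adj]
            exact cj_of_commute (commTZ (by omega) hjn a)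
          · -- i = j - 1
            obtain rfl : j = i + 1 := by omega
            rw [sw_high, sw_ne (show i+1+1 ≠ i by omega) (show i+1+1 ≠ i+1 by omega),
              XX_up (show i < i+1 by omega), XX_adj]
            exact C3 hjn a
        · -- i = j
          rw [hij.symm] at hjn ⊢
          rw [sw_low, sw_high, XX_down_base]
        · -- i > j
          rcases Nat.lt_or_ge (j+1) i with hij2 | hij2
          · -- i ≥ j + 2
            rw [sw_ne (show j ≠ i by omega) (show j ≠ i+1 by omega),
              sw_ne (show j+1 ≠ i by omega) (show j+1 ≠ i+1 by omega), XX_adj]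
            exact cj_of_commute (commTZ' (by omega) hi a)
          · -- i = j + 1
            obtain rfl : i = j + 1 := by omega
            rw [sw_ne (show j ≠ j+1 by omega) (show j ≠ j+1+1 by omega), sw_low,
              ← XX_adj j a, XX_up (show j < j+1 by omega)]
    · -- k < j
      have hgt : k < j := by omega
      rcases Nat.lt_or_ge (k+1) j with h2 | h2
      · -- gap ≥ 2
        obtain ⟨j', rfl⟩ : ∃ j', j = j' + 1 := ⟨j - 1, by omega⟩
        have hkj' : k < j' := by omega
        have hj'n : j' < n := by omega
        rw [XX_down hkj']
        rcases Nat.lt_trichotomy i j' with hij | hij | hij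
        · rcases Nat.lt_or_ge (i+1) j' with hij2 | hij2
          · -- i ≤ j' - 2
            have e1 : sw i j' = j' := sw_ne (by omega) (by omega)
            have e3 : sw i (j'+1) = j' + 1 := sw_ne (by omega) (by omega)
            have hsw : sw i k < j' := by simp only [sw]; split_ifs <;> omega
            have hti : Commute (Tw i : PBraid n A) (Tw j') := commTT (by omega) hj'n
            rw [e3]
            calc cj (Tw i : PBraid n A) (cj (Tw j') (XX j' k a))
                = cj (Tw i * Tw j') (XX j' k a) := by rw [cj_cj]
              _ = cj (Tw j' * Tw i) (XX j' k a) := by rw [hti.eq]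
              _ = cj (Tw j') (cj (Tw i) (XX j' k a)) := by rw [← cj_cj]
              _ = cj (Tw j') (XX (sw i j') (sw i k) a) := by
                  rw [ih i j' k a hi (by omega) hk (by omega) (by omega)]
              _ = cj (Tw j') (XX j' (sw i k) a) := by rw [e1]
              _ = XX (j'+1) (sw i k) a := (XX_down hsw a).symm
          · -- i = j' - 1
            obtain rfl : j' = i + 1 := by omega
            have hb : i + 1 < n := hj'n
            rcases Nat.lt_or_ge k i with hki | hki
            · -- k < i : braid juggle
              have e1 : sw i k = k := sw_ne (by omega) (by omega)
              have e3 : sw i (i+1+1) = i+2 := sw_ne (by omega) (by omega)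
              rw [e1, e3, XX_down (show k < i from hki)]
              calc cj (Tw i : PBraid n A) (cj (Tw (i+1)) (cj (Tw i) (XX i k a)))
                  = cj (Tw i * Tw (i+1) * Tw i) (XX i k a) := by
                    simp only [cj_cj]; all_goals (congr 1; group)
                _ = cj (Tw (i+1) * Tw i * Tw (i+1)) (XX i k a) := by rw [braidT hb]
                _ = cj (Tw (i+1) * Tw i) (cj (Tw (i+1)) (XX i k a)) := by
                    simp only [cj_cj]; all_goals (congr 1; group)
                _ = cj (Tw (i+1) * Tw i) (XX (sw (i+1) i) (sw (i+1) k) a) := by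
                    rw [ih (i+1) i k a hb (by omega) hk (by omega) (by omega)]
                _ = cj (Tw (i+1) * Tw i) (XX i k a) := by
                    rw [sw_ne (show i ≠ i+1 by omega) (show i ≠ i+1+1 by omega),
                      sw_ne (show k ≠ i+1 by omega) (show k ≠ i+1+1 by omega)]
                _ = cj (Tw (i+1)) (cj (Tw i) (XX i k a)) := by rw [← cj_cj]
                _ = cj (Tw (i+1)) (XX (sw i i) (sw i k) a) := by
                    rw [ih i i k a hi (by omega) hk (by omega) (by omega)]
                _ = cj (Tw (i+1)) (XX (i+1) k a) := by rw [sw_low, e1]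
                _ = XX (i+2) k a := (XX_down (show k < i+1 by omega) a).symm
            · -- k = i
              have hki' : k = i := by omega
              subst hki'
              have hbn : k + 1 < n := hj'n
              rw [sw_ne (show k+1+1 ≠ k by omega) (show k+1+1 ≠ k+1 by omega), sw_low,
                XX_down_base]
              calc cj (Tw k : PBraid n A) (cj (Tw (k+1)) (cj (Tw k) (Zw k a)))
                  = cj (Tw k * Tw (k+1) * Tw k) (Zw k a) := by
                    simp only [cj_cj]; all_goals (congr 1; group)
                _ = cj (Tw (k+1) * Tw k * Tw (k+1)) (Zw k a) := by rw [braidT hbn]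
                _ = cj (Tw (k+1) * Tw k) (cj (Tw (k+1)) (Zw k a)) := by
                    simp only [cj_cj]; all_goals (congr 1; group)
                _ = cj (Tw (k+1) * Tw k) (cj (Tw k) (Zw (k+1) a)) := by rw [← C3 hbn]
                _ = cj (Tw (k+1)) (cj (Tw k * Tw k) (Zw (k+1) a)) := by
                    simp only [cj_cj]; all_goals (congr 1; group)
                _ = cj (Tw (k+1)) (Zw (k+1) a) := by rw [sqZ hi hbn]
                _ = XX (k+2) (k+1) a := (XX_down_base (k+1) a).symm
        · -- i = j'
          rw [hij]
          have hXd : (XX j' k a : PBraid n A) = cj (asc k j') (Zw k a) := by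
            rw [XX, if_neg (by omega)]
          rw [sw_high, sw_ne (show k ≠ j' by omega) (show k ≠ j'+1 by omega), hXd, cj_cj,
            sqXXdown j' (by omega) (by omega) (by omega) a, ← hXd]
        · -- i > j'
          rcases Nat.lt_or_ge (j'+1) i with hij2 | hij2
          · -- i ≥ j' + 2
            have e1 : sw i j' = j' := sw_ne (by omega) (by omega)
            have e3 : sw i (j'+1) = j' + 1 := sw_ne (by omega) (by omega)
            have e2 : sw i k = k := sw_ne (by omega) (by omega)
            have hti : Commute (Tw j' : PBraid n A) (Tw i) := commTT (by omega) hi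
            rw [e2, e3]
            calc cj (Tw i : PBraid n A) (cj (Tw j') (XX j' k a))
                = cj (Tw i * Tw j') (XX j' k a) := by rw [cj_cj]
              _ = cj (Tw j' * Tw i) (XX j' k a) := by rw [hti.symm.eq]
              _ = cj (Tw j') (cj (Tw i) (XX j' k a)) := by rw [← cj_cj]
              _ = cj (Tw j') (XX (sw i j') (sw i k) a) := by
                  rw [ih i j' k a hi (by omega) hk (by omega) (by omega)]
              _ = cj (Tw j') (XX j' k a) := by rw [e1, e2]
              _ = XX (j'+1) k a := (XX_down hkj' a).symm
          · -- i = j' + 1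
            obtain rfl : i = j' + 1 := by omega
            rw [sw_low, sw_ne (show k ≠ j'+1 by omega) (show k ≠ j'+1+1 by omega),
              ← XX_down hkj', XX_down (show k < j'+1 by omega)]
      · -- j = k + 1
        obtain rfl : j = k + 1 := by omega
        have hkn : k < n := by omega
        rw [XX_down_base]
        rcases Nat.lt_trichotomy i k with hik | hik | hik
        · rcases Nat.lt_or_ge (i+1) k with hik2 | hik2
          · -- i ≤ k - 2
            rw [sw_ne (show k+1 ≠ i by omega) (show k+1 ≠ i+1 by omega),
              sw_ne (show k ≠ i by omega) (show k ≠ i+1 by omega), XX_down_base]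
            have h1 : Commute (Tw i : PBraid n A) (Tw k) := commTT (by omega) hkn
            have h2 : Commute (Tw i : PBraid n A) (Zw k a) := commTZ (by omega) hkn a
            exact cj_of_commute ((h1.mul_right h2).mul_right h1.inv_right)
          · -- i = k - 1
            obtain rfl : k = i + 1 := by omega
            have hb : i + 1 < n := hkn
            rw [sw_ne (show i+1+1 ≠ i by omega) (show i+1+1 ≠ i+1 by omega), sw_high,
              XX_down (show i < i+1 by omega), XX_down_base]
            calc cj (Tw i : PBraid n A) (cj (Tw (i+1)) (Zw (i+1) a))
                = cj (Tw i * Tw (i+1) * Tw i) (cj ((Tw i)⁻¹) (Zw (i+1) a)) := by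
                  simp only [cj_cj]; all_goals (congr 1; group)
              _ = cj (Tw i * Tw (i+1) * Tw i) (cj (Tw i) (Zw (i+1) a)) := by
                  rw [cj_invT hi hb]
              _ = cj (Tw i * Tw (i+1) * Tw i) (cj (Tw (i+1)) (Zw i a)) := by rw [C3 hb]
              _ = cj (Tw (i+1) * Tw i * Tw (i+1)) (cj (Tw (i+1)) (Zw i a)) := by rw [braidT hb]
              _ = cj (Tw (i+1) * Tw i) (cj (Tw (i+1) * Tw (i+1)) (Zw i a)) := by
                  simp only [cj_cj]; all_goals (congr 1; group)
              _ = cj (Tw (i+1) * Tw i) (Zw i a) := by rw [sqZ hb hi]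
              _ = cj (Tw (i+1)) (cj (Tw i) (Zw i a)) := by rw [← cj_cj]
        · -- i = k
          rw [hik]
          rw [sw_high, sw_low, XX_adj, cj_cj]
          exact sqZ hkn hkn a
        · -- i > k
          rcases Nat.lt_or_ge (k+1) i with hik2 | hik2
          · -- i ≥ k + 2
            rw [sw_ne (show k+1 ≠ i by omega) (show k+1 ≠ i+1 by omega),
              sw_ne (show k ≠ i by omega) (show k ≠ i+1 by omega), XX_down_base]
            have h1 : Commute (Tw i : PBraid n A) (Tw k) := (commTT (by omega) hi).symm
            have h2 : Commute (Tw i : PBraid n A) (Zw k a) := commTZ' (by omega) hi a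
            exact cj_of_commute ((h1.mul_right h2).mul_right h1.inv_right)
          · -- i = k + 1
            obtain rfl : i = k + 1 := by omega
            rw [sw_low, sw_ne (show k ≠ k+1 by omega) (show k ≠ k+1+1 by omega),
              ← XX_down_base, XX_down (show k < k+1 by omega)]
end Stmt9Aux

namespace Stmt9Aux

variable {n : ℕ} {A : Type} [NonUnitalRing A]

/-- The homomorphism `Braid n →* PBraid n A`, `σ_i ↦ T i`. -/
def θb : Braid n →* PBraid n A :=
  PresentedGroup.toGroup (f := fun i : Fin n => (Tw i.val : PBraid n A)) (by
    rintro r (⟨i, j, hij, rfl⟩ | ⟨i, j, hij, rfl⟩) <;>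
      simp only [map_mul, map_inv, FreeGroup.lift_apply_of, mul_inv_eq_one]
    · exact (commTT hij j.isLt).eq
    · rw [← hij]
      exact braidT (hij ▸ j.isLt))

lemma θb_gen (i : Fin n) : (θb (bgen i) : PBraid n A) = Tw i.val :=
  PresentedGroup.toGroup.of _

lemma XXadd {j k : ℕ} (hj : j ≤ n) (hk : k ≤ n) (hjk : j ≠ k) (a b : A) :
    (XX j k a : PBraid n A) * XX j k b = XX j k (a + b) := by
  rcases Nat.lt_or_ge j k with h | h
  · rw [XX, if_pos h, XX, if_pos h, XX, if_pos h, ← cj_mul, z_add (by omega)]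
  · have h' : k < j := by omega
    rw [XX, if_neg (by omega), XX, if_neg (by omega), XX, if_neg (by omega), ← cj_mul,
      z_add (by omega)]

lemma cj_inj {G : Type*} [Group G] {g u v : G} (h : cj g u = cj g v) : u = v := by
  simpa [cj] using h

lemma swap_val (i : Fin n) (p : Fin (n+1)) :
    ((Equiv.swap i.castSucc i.succ p : Fin (n+1)) : ℕ) = sw i.val p.val := by
  rcases eq_or_ne p i.castSucc with h | h
  · rw [h, Equiv.swap_apply_left, Fin.val_succ, Fin.coe_castSucc, sw_low]
  · rcases eq_or_ne p i.succ with h2 | h2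
    · rw [h2, Equiv.swap_apply_right, Fin.coe_castSucc, Fin.val_succ, sw_high]
    · rw [Equiv.swap_apply_of_ne_of_ne h h2,
        sw_ne (fun hc => h (Fin.ext (by simpa using hc)))
          (fun hc => h2 (Fin.ext (by simpa using hc)))]

/-- Transport along any permutation. -/
lemma transport (σ : Equiv.Perm (Fin (n+1))) :
    ∃ g : PBraid n A, ∀ (p q : Fin (n+1)), p ≠ q → ∀ a : A,
      cj g (XX (p : ℕ) (q : ℕ) a) = XX ((σ p : Fin (n+1)) : ℕ) ((σ q : Fin (n+1)) : ℕ) a := by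
  have hσ : σ ∈ Submonoid.closure (Set.range fun i : Fin n ↦ Equiv.swap i.castSucc i.succ) := by
    rw [Equiv.Perm.mclosure_swap_castSucc_succ]; trivial
  induction hσ using Submonoid.closure_induction with
  | mem τ hτ =>
    obtain ⟨i, rfl⟩ := hτ
    refine ⟨Tw i.val, fun p q hpq a => ?_⟩
    rw [swap_val, swap_val]
    exact conjP ((p : ℕ) - q + (q - p)) i.val p.val q.val a i.isLt (by omega) (by omega)
      (fun hc => hpq (Fin.ext hc)) le_rfl
  | one => exact ⟨1, fun p q hpq a => by rw [cj_id]; rfl⟩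
  | mul τ₁ τ₂ h₁ h₂ ih₁ ih₂ =>
    obtain ⟨g₁, hg₁⟩ := ih₁
    obtain ⟨g₂, hg₂⟩ := ih₂
    refine ⟨g₁ * g₂, fun p q hpq a => ?_⟩
    rw [← cj_cj, hg₂ p q hpq a, hg₁ (τ₂ p) (τ₂ q) (fun hc => hpq (τ₂.injective hc)) a]
    rfl

lemma perm3 {α : Type*} [DecidableEq α] {p0 p1 p2 q0 q1 q2 : α}
    (hp01 : p0 ≠ p1) (hp02 : p0 ≠ p2) (hp12 : p1 ≠ p2)
    (hq01 : q0 ≠ q1) (hq02 : q0 ≠ q2) (hq12 : q1 ≠ q2) :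
    ∃ σ : Equiv.Perm α, σ p0 = q0 ∧ σ p1 = q1 ∧ σ p2 = q2 := by
  set σ1 := Equiv.swap p0 q0 with hσ1
  set σ2 := Equiv.swap (σ1 p1) q1 with hσ2
  set σ3 := Equiv.swap (σ2 (σ1 p2)) q2 with hσ3
  have e0 : σ1 p0 = q0 := Equiv.swap_apply_left _ _
  have e1 : σ2 (σ1 p1) = q1 := Equiv.swap_apply_left _ _
  have e2 : σ3 (σ2 (σ1 p2)) = q2 := Equiv.swap_apply_left _ _
  have f0 : σ2 q0 = q0 := Equiv.swap_apply_of_ne_of_ne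
    (fun hc => hp01 (σ1.injective (e0.trans hc))) hq01
  have e0' : σ2 (σ1 p0) = q0 := by rw [e0, f0]
  have f0' : σ3 q0 = q0 := Equiv.swap_apply_of_ne_of_ne
    (fun hc => hp02 (σ1.injective (σ2.injective (e0'.trans hc)))) hq02
  have f1 : σ3 q1 = q1 := Equiv.swap_apply_of_ne_of_ne
    (fun hc => hp12 (σ1.injective (σ2.injective (e1.trans hc)))) hq12
  refine ⟨σ3 * σ2 * σ1, ?_, ?_, e2⟩
  · show σ3 (σ2 (σ1 p0)) = q0
    rw [e0, f0, f0']
  · show σ3 (σ2 (σ1 p1)) = q1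
    rw [e1, f1]

lemma perm4 {α : Type*} [DecidableEq α] {p0 p1 p2 p3 q0 q1 q2 q3 : α}
    (hp01 : p0 ≠ p1) (hp02 : p0 ≠ p2) (hp03 : p0 ≠ p3)
    (hp12 : p1 ≠ p2) (hp13 : p1 ≠ p3) (hp23 : p2 ≠ p3)
    (hq01 : q0 ≠ q1) (hq02 : q0 ≠ q2) (hq03 : q0 ≠ q3)
    (hq12 : q1 ≠ q2) (hq13 : q1 ≠ q3) (hq23 : q2 ≠ q3) :
    ∃ σ : Equiv.Perm α, σ p0 = q0 ∧ σ p1 = q1 ∧ σ p2 = q2 ∧ σ p3 = q3 := by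
  obtain ⟨τ, ht0, ht1, ht2⟩ := perm3 hp01 hp02 hp12 hq01 hq02 hq12
  set σ4 := Equiv.swap (τ p3) q3 with hσ4
  have g0 : σ4 q0 = q0 := Equiv.swap_apply_of_ne_of_ne
    (fun hc => hp03 (τ.injective (ht0.trans hc))) hq03
  have g1 : σ4 q1 = q1 := Equiv.swap_apply_of_ne_of_ne
    (fun hc => hp13 (τ.injective (ht1.trans hc))) hq13
  have g2 : σ4 q2 = q2 := Equiv.swap_apply_of_ne_of_ne
    (fun hc => hp23 (τ.injective (ht2.trans hc))) hq23
  refine ⟨σ4 * τ, ?_, ?_, ?_, ?_⟩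
  · show σ4 (τ p0) = q0; rw [ht0, g0]
  · show σ4 (τ p1) = q1; rw [ht1, g1]
  · show σ4 (τ p2) = q2; rw [ht2, g2]
  · show σ4 (τ p3) = q3; exact Equiv.swap_apply_left _ _

lemma card_le_of_triple {m : ℕ} {p q r : Fin m} (hpq : p ≠ q) (hpr : p ≠ r) (hqr : q ≠ r) :
    3 ≤ m := by
  have h : ({p, q, r} : Finset (Fin m)).card = 3 := by
    rw [Finset.card_insert_of_notMem (by simp [hpq, hpr]),
      Finset.card_insert_of_notMem (by simp [hqr]), Finset.card_singleton]
  calc 3 = ({p, q, r} : Finset (Fin m)).card := h.symm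
    _ ≤ Fintype.card (Fin m) := Finset.card_le_univ _
    _ = m := Fintype.card_fin m

lemma card_le_of_quad {m : ℕ} {p q r s : Fin m} (hpq : p ≠ q) (hpr : p ≠ r) (hps : p ≠ s)
    (hqr : q ≠ r) (hqs : q ≠ s) (hrs : r ≠ s) : 4 ≤ m := by
  have h : ({p, q, r, s} : Finset (Fin m)).card = 4 := by
    rw [Finset.card_insert_of_notMem (by simp [hpq, hpr, hps]),
      Finset.card_insert_of_notMem (by simp [hqr, hqs]),
      Finset.card_insert_of_notMem (by simp [hrs]), Finset.card_singleton]
  calc 4 = ({p, q, r, s} : Finset (Fin m)).card := h.symm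
    _ ≤ Fintype.card (Fin m) := Finset.card_le_univ _
    _ = m := Fintype.card_fin m

end Stmt9Aux

namespace Stmt9Aux

variable {n : ℕ} {A : Type} [NonUnitalRing A]

lemma XX01 (a : A) : (XX 0 1 a : PBraid n A) = Zw 0 a := XX_adj 0 a
lemma XX12 (a : A) : (XX 1 2 a : PBraid n A) = Zw 1 a := XX_adj 1 a
lemma XX23 (a : A) : (XX 2 3 a : PBraid n A) = Zw 2 a := XX_adj 2 a

lemma XX02 (a : A) : (XX 0 2 a : PBraid n A) = cj (Tw 1) (Zw 0 a) := by
  have h : (XX 0 (1+1) a : PBraid n A) = cj (Tw 1) (XX 0 1 a) := XX_up (by omega) a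
  rw [XX_adj] at h
  exact h

lemma base_comm_01_02 (hn : 1 < n) (a b : A) :
    (XX 0 1 a : PBraid n A) * XX 0 2 b = XX 0 2 b * XX 0 1 a := by
  rw [XX01, XX02]
  exact Mcomm1 hn a b

lemma base_comm_02_12 (hn : 1 < n) (a b : A) :
    (XX 0 2 a : PBraid n A) * XX 1 2 b = XX 1 2 b * XX 0 2 a := by
  rw [XX02, XX12]
  exact Mcomm2 hn a b

lemma base_comm_01_23 (hn : 2 < n) (a b : A) :
    (XX 0 1 a : PBraid n A) * XX 2 3 b = XX 2 3 b * XX 0 1 a := by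
  rw [XX01, XX23]
  exact (commZZ (by omega) hn a b).eq

lemma base_st2 (hn : 1 < n) (a b : A) :
    (XX 0 1 a : PBraid n A) * XX 1 2 b = XX 1 2 b * XX 0 2 (a * b) * XX 0 1 a := by
  rw [XX01, XX12, XX02]
  exact Mst2 hn a b

/-- The assignment of generators of the Steinberg group. -/
def ξf : StGen (n+1) A → PBraid n A := fun q => XX (q.1.1.1 : ℕ) (q.1.1.2 : ℕ) q.2

lemma lift_xg (i j : Fin (n+1)) (h : i ≠ j) (a : A) :
    FreeGroup.lift (ξf (n := n)) (xg i j h a) = XX (i : ℕ) (j : ℕ) a :=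
  FreeGroup.lift_apply_of

lemma ξ_rels : ∀ r ∈ stRels (n+1) A, FreeGroup.lift (ξf (n := n)) r = 1 := by
  rintro r (⟨i, j, h, a, b, rfl⟩ | ⟨i, j, k, l, hij, hkl, a, b, hil, hjk, rfl⟩ |
    ⟨i, j, k, hij, hjk, hik, a, b, rfl⟩) <;>
      simp only [lift_xg, map_mul, map_inv, FreeGroup.lift_apply_of, mul_inv_eq_one, ξf]
  · exact XXadd (by omega) (by omega) (fun hc => h (Fin.ext hc)) a b
  · by_cases hik : i = k
    · subst hik
      by_cases hjl : j = l
      · subst hjl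
        rw [XXadd (by omega) (by omega) (fun hc => hij (Fin.ext hc)) a b,
          XXadd (by omega) (by omega) (fun hc => hij (Fin.ext hc)) b a, add_comm a b]
      · have h3 : 3 ≤ n + 1 := card_le_of_triple hij hil hjl
        obtain ⟨σ, hs0, hs1, hs2⟩ := perm3 hij hil hjl
          (show (⟨0, by omega⟩ : Fin (n+1)) ≠ ⟨1, by omega⟩ by simp [Fin.ext_iff])
          (show (⟨0, by omega⟩ : Fin (n+1)) ≠ ⟨2, by omega⟩ by simp [Fin.ext_iff])
          (show (⟨1, by omega⟩ : Fin (n+1)) ≠ ⟨2, by omega⟩ by simp [Fin.ext_iff])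
        obtain ⟨g, hg⟩ := transport (A := A) σ
        apply cj_inj (g := g)
        rw [cj_mul, cj_mul, hg i j hij a, hg i l hil b, hs0, hs1, hs2]
        exact base_comm_01_02 (by omega) a b
    · by_cases hjl : j = l
      · subst hjl
        have h3 : 3 ≤ n + 1 := card_le_of_triple hik (hij : i ≠ j) (fun hc => hjk hc.symm)
        obtain ⟨σ, hs0, hs1, hs2⟩ := perm3 hik hij (fun hc => hjk hc.symm)
          (show (⟨0, by omega⟩ : Fin (n+1)) ≠ ⟨1, by omega⟩ by simp [Fin.ext_iff])
          (show (⟨0, by omega⟩ : Fin (n+1)) ≠ ⟨2, by omega⟩ by simp [Fin.ext_iff])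
          (show (⟨1, by omega⟩ : Fin (n+1)) ≠ ⟨2, by omega⟩ by simp [Fin.ext_iff])
        obtain ⟨g, hg⟩ := transport (A := A) σ
        apply cj_inj (g := g)
        rw [cj_mul, cj_mul, hg i j hij a, hg k j hkl b, hs0, hs1, hs2]
        exact base_comm_02_12 (by omega) a b
      · have h4 : 4 ≤ n + 1 := card_le_of_quad hij hik hil hjk hjl hkl
        obtain ⟨σ, hs0, hs1, hs2, hs3⟩ := perm4 hij hik hil hjk hjl hkl
          (show (⟨0, by omega⟩ : Fin (n+1)) ≠ ⟨1, by omega⟩ by simp [Fin.ext_iff])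
          (show (⟨0, by omega⟩ : Fin (n+1)) ≠ ⟨2, by omega⟩ by simp [Fin.ext_iff])
          (show (⟨0, by omega⟩ : Fin (n+1)) ≠ ⟨3, by omega⟩ by simp [Fin.ext_iff])
          (show (⟨1, by omega⟩ : Fin (n+1)) ≠ ⟨2, by omega⟩ by simp [Fin.ext_iff])
          (show (⟨1, by omega⟩ : Fin (n+1)) ≠ ⟨3, by omega⟩ by simp [Fin.ext_iff])
          (show (⟨2, by omega⟩ : Fin (n+1)) ≠ ⟨3, by omega⟩ by simp [Fin.ext_iff])
        obtain ⟨g, hg⟩ := transport (A := A) σ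
        apply cj_inj (g := g)
        rw [cj_mul, cj_mul, hg i j hij a, hg k l hkl b, hs0, hs1, hs2, hs3]
        exact base_comm_01_23 (by omega) a b
  · have h3 : 3 ≤ n + 1 := card_le_of_triple hij hik hjk
    obtain ⟨σ, hs0, hs1, hs2⟩ := perm3 hij hik hjk
      (show (⟨0, by omega⟩ : Fin (n+1)) ≠ ⟨1, by omega⟩ by simp [Fin.ext_iff])
      (show (⟨0, by omega⟩ : Fin (n+1)) ≠ ⟨2, by omega⟩ by simp [Fin.ext_iff])
      (show (⟨1, by omega⟩ : Fin (n+1)) ≠ ⟨2, by omega⟩ by simp [Fin.ext_iff])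
    obtain ⟨g, hg⟩ := transport (A := A) σ
    apply cj_inj (g := g)
    rw [cj_mul, cj_mul, cj_mul, hg i j hij a, hg j k hjk b, hg i k hik (a*b), hs0, hs1, hs2]
    exact base_st2 (by omega) a b

end Stmt9Aux

namespace Stmt9Aux

variable {n : ℕ} {A : Type} [NonUnitalRing A]

/-- The homomorphism `St_{n+1}(A) →* Br_{n+1}(A)`. -/
def ξ : Steinberg (n+1) A →* PBraid n A := PresentedGroup.toGroup ξ_rels

lemma ξ_gen (p q : Fin (n+1)) (h : p ≠ q) (a : A) :
    (ξ (x p q h a) : PBraid n A) = XX (p : ℕ) (q : ℕ) a :=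
  PresentedGroup.toGroup.of _

lemma st_master {m : ℕ} {p0 p1 p2 : Fin m} (h01 : p0 ≠ p1) (h02 : p0 ≠ p2) (h12 : p1 ≠ p2)
    (a b c : A) :
    x p0 p1 h01 a * x p0 p2 h02 b * x p1 p2 h12 c
      = x p1 p2 h12 c * x p0 p2 h02 (b + a * c) * x p0 p1 h01 a := by
  calc x p0 p1 h01 a * x p0 p2 h02 b * x p1 p2 h12 c
      = x p0 p2 h02 b * x p0 p1 h01 a * x p1 p2 h12 c := by
        rw [st1 h01 h02 h02 (Ne.symm h01) a b]
    _ = x p0 p2 h02 b * (x p1 p2 h12 c * x p0 p2 h02 (a * c) * x p0 p1 h01 a) := by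
        rw [mul_assoc, st2 h01 h12 h02 a c]
    _ = (x p0 p2 h02 b * x p1 p2 h12 c) * x p0 p2 h02 (a * c) * x p0 p1 h01 a := by
        group
    _ = (x p1 p2 h12 c * x p0 p2 h02 b) * x p0 p2 h02 (a * c) * x p0 p1 h01 a := by
        rw [st1 h02 h12 h02 (Ne.symm h12) b c]
    _ = x p1 p2 h12 c * (x p0 p2 h02 b * x p0 p2 h02 (a * c)) * x p0 p1 h01 a := by
        group
    _ = x p1 p2 h12 c * x p0 p2 h02 (b + a * c) * x p0 p1 h01 a := by
        rw [st0]

section Phi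

variable (act : Braid n →* MulAut (Steinberg (n + 1) A))
variable (hact : ∀ (i : Fin n) (j k : Fin (n + 1)) (h : j ≠ k) (a : A),
        act (bgen i) (x j k h a) =
          x (Equiv.swap i.castSucc i.succ j) (Equiv.swap i.castSucc i.succ k)
            ((Equiv.swap i.castSucc i.succ).injective.ne h) a)

/-- The homomorphism `Br_{n+1}(A) →* St_{n+1}(A) ⋊ Br_{n+1}`. -/
def φh : PBraid n A →* Steinberg (n+1) A ⋊[act] Braid n :=
  PresentedGroup.toGroup
    (f := fun p : Fin n × A =>
      ⟨x p.1.castSucc p.1.succ (Fin.castSucc_lt_succ : p.1.castSucc < p.1.succ).ne p.2, bgen p.1⟩) (by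
    rintro r (⟨i, a, b, rfl⟩ | ⟨i, j, a, b, hij, rfl⟩ | ⟨i, j, a, b, c, hij, rfl⟩) <;>
      simp only [map_mul, map_inv, FreeGroup.lift_apply_of, mul_inv_eq_one]
    · -- A1
      ext
      · simp only [SemidirectProduct.mul_left, SemidirectProduct.mul_right, st_zero,
          map_one, map_mul, MulAut.mul_apply, hact, Equiv.swap_apply_left,
          Equiv.swap_apply_right, mul_one, one_mul]
        exact st0 _ _ _ a b
      · simp only [SemidirectProduct.mul_right]
    · -- A1 × A1
      have e1 : Equiv.swap i.castSucc i.succ j.castSucc = j.castSucc :=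
        Equiv.swap_apply_of_ne_of_ne
          (Fin.ne_of_val_ne (by simp only [Fin.coe_castSucc, Fin.val_succ]; omega))
          (Fin.ne_of_val_ne (by simp only [Fin.coe_castSucc, Fin.val_succ]; omega))
      have e2 : Equiv.swap i.castSucc i.succ j.succ = j.succ :=
        Equiv.swap_apply_of_ne_of_ne
          (Fin.ne_of_val_ne (by simp only [Fin.coe_castSucc, Fin.val_succ]; omega))
          (Fin.ne_of_val_ne (by simp only [Fin.coe_castSucc, Fin.val_succ]; omega))
      have e3 : Equiv.swap j.castSucc j.succ i.castSucc = i.castSucc :=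
        Equiv.swap_apply_of_ne_of_ne
          (Fin.ne_of_val_ne (by simp only [Fin.coe_castSucc, Fin.val_succ]; omega))
          (Fin.ne_of_val_ne (by simp only [Fin.coe_castSucc, Fin.val_succ]; omega))
      have e4 : Equiv.swap j.castSucc j.succ i.succ = i.succ :=
        Equiv.swap_apply_of_ne_of_ne
          (Fin.ne_of_val_ne (by simp only [Fin.coe_castSucc, Fin.val_succ]; omega))
          (Fin.ne_of_val_ne (by simp only [Fin.coe_castSucc, Fin.val_succ]; omega))
      ext
      · simp only [SemidirectProduct.mul_left, SemidirectProduct.mul_right, hact, e1, e2, e3, e4]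
        exact st1 _ _
          (Fin.ne_of_val_ne (by simp only [Fin.coe_castSucc, Fin.val_succ]; omega))
          (Fin.ne_of_val_ne (by simp only [Fin.coe_castSucc, Fin.val_succ]; omega)) a b
      · simp only [SemidirectProduct.mul_right]
        exact brelComm hij
    · -- A2
      have hcs : j.castSucc = i.succ := Fin.ext (by simp [Fin.coe_castSucc, Fin.val_succ, ← hij])
      have f1 : Equiv.swap i.castSucc i.succ i.succ = i.castSucc := Equiv.swap_apply_right _ _
      have f2 : Equiv.swap i.castSucc i.succ i.castSucc = i.succ := Equiv.swap_apply_left _ _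
      have f3 : Equiv.swap i.castSucc i.succ j.succ = j.succ :=
        Equiv.swap_apply_of_ne_of_ne
          (Fin.ne_of_val_ne (by simp only [Fin.coe_castSucc, Fin.val_succ]; omega))
          (Fin.ne_of_val_ne (by simp only [Fin.coe_castSucc, Fin.val_succ]; omega))
      have f4 : Equiv.swap i.succ j.succ i.castSucc = i.castSucc :=
        Equiv.swap_apply_of_ne_of_ne
          (Fin.ne_of_val_ne (by simp only [Fin.coe_castSucc, Fin.val_succ]; omega))
          (Fin.ne_of_val_ne (by simp only [Fin.coe_castSucc, Fin.val_succ]; omega))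
      have f5 : Equiv.swap i.succ j.succ i.succ = j.succ := Equiv.swap_apply_left _ _
      have f6 : Equiv.swap i.succ j.succ j.succ = i.succ := Equiv.swap_apply_right _ _
      ext
      · simp only [SemidirectProduct.mul_left, SemidirectProduct.mul_right, hact,
          map_mul, MulAut.mul_apply, hact, hcs, f1, f2, f3, f4, f5, f6]
        exact st_master _ _ _ a b c
      · simp only [SemidirectProduct.mul_right]
        exact brelBraid hij)

lemma φh_gen (i : Fin n) (a : A) :
    φh act hact (y i a)
      = ⟨x i.castSucc i.succ (Fin.castSucc_lt_succ : i.castSucc < i.succ).ne a, bgen i⟩ :=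
  PresentedGroup.toGroup.of _

end Phi

end Stmt9Aux

namespace Stmt9Aux

variable {n : ℕ} {A : Type} [NonUnitalRing A]

lemma map_cj {G H : Type*} [Group G] [Group H] (f : G →* H) (g u : G) :
    f (cj g u) = cj (f g) (f u) := by simp [cj, map_mul, map_inv]

lemma x_eq {m : ℕ} {p q p' q' : Fin m} (hp : p = p') (hq : q = q') (h : p ≠ q) (a : A) :
    x p q h a = x p' q' (hp ▸ hq ▸ h) a := by subst hp; subst hq; rfl

section Phi

variable (act : Braid n →* MulAut (Steinberg (n + 1) A))
variable (hact : ∀ (i : Fin n) (j k : Fin (n + 1)) (h : j ≠ k) (a : A),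
        act (bgen i) (x j k h a) =
          x (Equiv.swap i.castSucc i.succ j) (Equiv.swap i.castSucc i.succ k)
            ((Equiv.swap i.castSucc i.succ).injective.ne h) a)

lemma φT (m : ℕ) (hm : m < n) :
    φh act hact (Tw m) = SemidirectProduct.inr (bgen ⟨m, hm⟩) := by
  rw [Tw, Yw, dif_pos hm, φh_gen]
  ext
  · simp [st_zero, SemidirectProduct.left_inr]
  · simp [SemidirectProduct.right_inr]

lemma φZ (m : ℕ) (hm : m < n) (a : A) :
    φh act hact (Zw m a)
      = SemidirectProduct.inl
          (x (Fin.castSucc ⟨m, hm⟩) (Fin.succ ⟨m, hm⟩) (Fin.castSucc_lt_succ : Fin.castSucc ⟨m, hm⟩ < Fin.succ ⟨m, hm⟩).ne a) := by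
  have hY : φh act hact (Yw m a)
      = SemidirectProduct.inl
          (x (Fin.castSucc ⟨m, hm⟩) (Fin.succ ⟨m, hm⟩) (Fin.castSucc_lt_succ : Fin.castSucc ⟨m, hm⟩ < Fin.succ ⟨m, hm⟩).ne a) *
        SemidirectProduct.inr (bgen ⟨m, hm⟩) := by
    rw [Yw, dif_pos hm, φh_gen, SemidirectProduct.mk_eq_inl_mul_inr]
  rw [Zw, map_mul, map_inv, hY, φT act hact m hm]
  group

lemma sw_bound {i m : ℕ} (hi : i < n) (hm : m < n + 1) : sw i m < n + 1 := by
  simp only [sw]; split_ifs <;> omega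

lemma φXX : ∀ (d jv kv : ℕ) (hj : jv < n+1) (hk : kv < n+1)
    (hne : (⟨jv, hj⟩ : Fin (n+1)) ≠ ⟨kv, hk⟩) (a : A), jv - kv + (kv - jv) ≤ d →
    φh act hact (XX jv kv a) = SemidirectProduct.inl (x ⟨jv, hj⟩ ⟨kv, hk⟩ hne a) := by
  intro d
  induction d with
  | zero =>
    intro jv kv hj hk hne a hd
    exact absurd hd (by have : jv ≠ kv := fun h => hne (Fin.ext h); omega)
  | succ d ih =>
    intro jv kv hj hk hne a hd
    have hv : jv ≠ kv := fun h => hne (Fin.ext h)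
    rcases Nat.lt_or_ge jv kv with hlt | hge
    · rcases Nat.lt_or_ge (jv+1) kv with h2 | h2
      · -- up step
        obtain ⟨k', rfl⟩ : ∃ k', kv = k'+1 := ⟨kv-1, by omega⟩
        have hk'n : k' < n := by omega
        rw [XX_up (show jv < k' by omega), map_cj, φT act hact k' hk'n,
          ih jv k' hj (by omega) (by simp only [ne_eq, Fin.mk.injEq]; omega) a (by omega),
          cj, ← map_inv, ← SemidirectProduct.inl_aut, hact]
        refine congrArg _ (x_eq ?_ ?_ _ a)
        · exact Fin.ext (by rw [swap_val]; simp only [Fin.val_mk]; exact sw_ne (by omega) (by omega))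
        · exact Fin.ext (by rw [swap_val]; exact sw_low k')
      · -- adjacent up
        obtain rfl : kv = jv + 1 := by omega
        rw [show (XX jv (jv+1) a : PBraid n A) = Zw jv a from XX_adj jv a,
          φZ act hact jv (by omega) a]
        exact congrArg _ (x_eq (Fin.ext rfl) (Fin.ext rfl) _ a)
    · rcases Nat.lt_or_ge (kv+1) jv with h2 | h2
      · -- down step
        obtain ⟨j', rfl⟩ : ∃ j', jv = j'+1 := ⟨jv-1, by omega⟩
        have hj'n : j' < n := by omega
        rw [XX_down (show kv < j' by omega), map_cj, φT act hact j' hj'n,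
          ih j' kv (by omega) hk (by simp only [ne_eq, Fin.mk.injEq]; omega) a (by omega),
          cj, ← map_inv, ← SemidirectProduct.inl_aut, hact]
        refine congrArg _ (x_eq ?_ ?_ _ a)
        · exact Fin.ext (by rw [swap_val]; exact sw_low j')
        · exact Fin.ext (by rw [swap_val]; simp only [Fin.val_mk]; exact sw_ne (by omega) (by omega))
      · -- adjacent down
        obtain rfl : jv = kv + 1 := by omega
        have hkn : kv < n := by omega
        rw [XX_down_base, map_cj, φT act hact kv hkn, φZ act hact kv hkn a,
          cj, ← map_inv, ← SemidirectProduct.inl_aut, hact]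
        refine congrArg _ (x_eq ?_ ?_ _ a)
        · exact Fin.ext (by rw [swap_val]; exact sw_low kv)
        · exact Fin.ext (by rw [swap_val]; exact sw_high kv)

include hact in
lemma hcomp : ∀ g : Braid n, (ξ (n := n) (A := A)).comp (act g).toMonoidHom
    = (MulAut.conj (θb g)).toMonoidHom.comp ξ := by
  intro g
  have hg : g ∈ Subgroup.closure (Set.range (PresentedGroup.of : Fin n → Braid n)) := by
    rw [PresentedGroup.closure_range_of]; trivial
  induction hg using Subgroup.closure_induction with
  | mem τ hτ =>
    obtain ⟨i, rfl⟩ := hτ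
    refine PresentedGroup.ext fun s => ?_
    obtain ⟨⟨⟨p, q⟩, h⟩, a⟩ := s
    show ξ (act (bgen i) (x p q h a)) = θb (bgen i) * ξ (x p q h a) * (θb (bgen i))⁻¹
    rw [hact, ξ_gen, ξ_gen, θb_gen, swap_val, swap_val]
    exact (conjP ((p : ℕ) - q + (q - p)) i.val p.val q.val a i.isLt (by omega) (by omega)
      (fun hc => h (Fin.ext hc)) le_rfl).symm
  | one =>
    refine MonoidHom.ext fun s => ?_
    simp
  | mul τ₁ τ₂ _ _ ih₁ ih₂ =>
    refine MonoidHom.ext fun s => ?_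
    have h1 := DFunLike.congr_fun ih₁ ((act τ₂) s)
    have h2 := DFunLike.congr_fun ih₂ s
    simp only [MonoidHom.comp_apply, MulEquiv.coe_toMonoidHom, MulAut.conj_apply] at h1 h2 ⊢
    rw [map_mul, MulAut.mul_apply, h1, h2, map_mul]
    group
  | inv τ _ ih =>
    refine MonoidHom.ext fun s => ?_
    have h1 := DFunLike.congr_fun ih ((act τ)⁻¹ s)
    simp only [MonoidHom.comp_apply, MulEquiv.coe_toMonoidHom, MulAut.conj_apply,
      MulAut.apply_inv_self] at h1 ⊢
    rw [map_inv, map_inv, h1]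
    group

end Phi

end Stmt9Aux

namespace Stmt9Aux

variable {n : ℕ} {A : Type} [NonUnitalRing A]

section Phi

variable (act : Braid n →* MulAut (Steinberg (n + 1) A))
variable (hact : ∀ (i : Fin n) (j k : Fin (n + 1)) (h : j ≠ k) (a : A),
        act (bgen i) (x j k h a) =
          x (Equiv.swap i.castSucc i.succ j) (Equiv.swap i.castSucc i.succ k)
            ((Equiv.swap i.castSucc i.succ).injective.ne h) a)

/-- The inverse homomorphism. -/
noncomputable def ψh : Steinberg (n+1) A ⋊[act] Braid n →* PBraid n A :=
  SemidirectProduct.lift ξ θb (hcomp act hact)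

lemma ψ_inl (s : Steinberg (n+1) A) :
    ψh act hact (SemidirectProduct.inl s) = ξ s := SemidirectProduct.lift_inl _ _ _ s

lemma ψ_inr (g : Braid n) :
    ψh act hact (SemidirectProduct.inr g) = θb g := SemidirectProduct.lift_inr _ _ _ g

lemma h₁ : (ψh act hact).comp (φh act hact) = MonoidHom.id (PBraid n A) := by
  refine PresentedGroup.ext fun p => ?_
  obtain ⟨i, a⟩ := p
  show ψh act hact (φh act hact (y i a)) = y i a
  rw [φh_gen, SemidirectProduct.mk_eq_inl_mul_inr, map_mul, ψ_inl, ψ_inr, ξ_gen, θb_gen,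
    Fin.coe_castSucc, Fin.val_succ, XX_adj, zt, Yw, dif_pos i.isLt, Fin.eta]

lemma h₂ : (φh act hact).comp (ψh act hact)
    = MonoidHom.id (Steinberg (n+1) A ⋊[act] Braid n) := by
  refine SemidirectProduct.hom_ext ?_ ?_
  · refine PresentedGroup.ext fun s => ?_
    obtain ⟨⟨⟨p, q⟩, h⟩, a⟩ := s
    show φh act hact (ψh act hact (SemidirectProduct.inl (x p q h a)))
      = SemidirectProduct.inl (x p q h a)
    rw [ψ_inl, ξ_gen,
      φXX act hact ((p : ℕ) - q + (q - p)) p.val q.val p.isLt q.isLt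
        (fun hc => h (Fin.ext (congrArg Fin.val hc))) a le_rfl]
  · refine PresentedGroup.ext fun i => ?_
    show φh act hact (ψh act hact (SemidirectProduct.inr (bgen i)))
      = SemidirectProduct.inr (bgen i)
    rw [ψ_inr, θb_gen, φT act hact i.val i.isLt]

end Phi

end Stmt9Aux


/-- The map `φ : Br_n(A) → St_n(A) ⋊ Br_n` induced by
`y_i^a ↦ (x_{i,i+1}(a), y_i)` is a group isomorphism, `Br_n` acting on
`St_n(A)` via `S_n` by permuting indices. -/
theorem stmt9 (n : ℕ) (A : Type) [NonUnitalRing A]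
    (act : Braid n →* MulAut (Steinberg (n + 1) A))
    (hact : ∀ (i : Fin n) (j k : Fin (n + 1)) (h : j ≠ k) (a : A),
        act (bgen i) (x j k h a) =
          x (Equiv.swap i.castSucc i.succ j) (Equiv.swap i.castSucc i.succ k)
            ((Equiv.swap i.castSucc i.succ).injective.ne h) a) :
    ∃ φ : PBraid n A ≃* Steinberg (n + 1) A ⋊[act] Braid n,
      ∀ (i : Fin n) (a : A),
        φ (y i a) = ⟨x i.castSucc i.succ (Fin.castSucc_lt_succ : i.castSucc < i.succ).ne a, bgen i⟩ := by
  refine ⟨MonoidHom.toMulEquiv (Stmt9Aux.φh act hact) (Stmt9Aux.ψh act hact)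
    (Stmt9Aux.h₁ act hact) (Stmt9Aux.h₂ act hact), fun i a => ?_⟩
  exact Stmt9Aux.φh_gen act hact i a
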